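/- arXiv:1111.7118 — 3 statements merged into one kernel-verified Lean document; each statement's English description precedes it below -/
import Mathlib

section
/- Let D ⊆ ℂⁿ be a bounded domain, let p ∈ D, and let G be a compact topological group acting continuously on D so that each g ∈ G acts as a biholomorphic automorphism of D fixing p. Then there exist a G-invariant open neighborhood U ⊆ D of p and a biholomorphism ψ from U onto an open subset of ℂⁿ with ψ(p) = 0 such that ψ(g·q) = (dg_p)(ψ(q) ) for all g ∈ G and all q ∈ U, where dg_p ∈ GL(n,ℂ) denotes the complex (Fréchet) derivative at p of the action of g. In particular, in these coordinates the action of G is linear. -/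
open Set

open Metric Filter MeasureTheory

/-- Schwarz-type estimate: a vector-valued holomorphic function on a disc whose oscillation
is bounded by `R₂` has derivative at the center bounded by `R₂ / R₁`. -/
lemma bochner_aux_core {n : ℕ} (F : ℂ → (Fin n → ℂ)) (R₁ R₂ : ℝ) (hR₁ : 0 < R₁)
    (hd : DifferentiableOn ℂ F (ball 0 R₁))
    (hb : ∀ t ∈ ball (0:ℂ) R₁, ‖F t - F 0‖ ≤ R₂) : ‖deriv F 0‖ ≤ R₂ / R₁ := by
  refine le_of_forall_pos_le_add fun c hc => ?_
  have h_maps : Set.MapsTo F (ball 0 R₁) (ball (F 0) (R₂ + c * R₁)) := by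
    intro t ht
    have h1 := hb t ht
    have h2 : 0 < c * R₁ := mul_pos hc hR₁
    rw [Metric.mem_ball, dist_eq_norm]
    linarith
  have h := Complex.norm_deriv_le_div_of_mapsTo_ball hd (h_maps.mono_right ball_subset_closedBall) hR₁
  calc ‖deriv F 0‖ ≤ (R₂ + c * R₁) / R₁ := h
    _ = R₂ / R₁ + c := by field_simp

/-- Directional derivative bound via the Schwarz estimate. -/
lemma bochner_aux_dir {n : ℕ} (f : (Fin n → ℂ) → (Fin n → ℂ)) (x : Fin n → ℂ) (s r₂ : ℝ)
    (hs : 0 < s)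
    (hd : ∀ y, dist y x ≤ s → DifferentiableAt ℂ f y)
    (hb : ∀ y, dist y x ≤ s → ‖f y - f x‖ ≤ r₂) (v : Fin n → ℂ) :
    ‖fderiv ℂ f x v‖ ≤ r₂ / s * ‖v‖ := by
  have hr₂ : 0 ≤ r₂ := by simpa using hb x (by simp [hs.le])
  rcases eq_or_ne v 0 with rfl | hv
  · simp
  have hvn : 0 < ‖v‖ := norm_pos_iff.mpr hv
  have hmem : ∀ t : ℂ, t ∈ ball (0:ℂ) (s / ‖v‖) → dist (x + t • v) x ≤ s := by
    intro t ht
    have h1 : ‖t‖ < s / ‖v‖ := by simpa [Metric.mem_ball, dist_eq_norm] using ht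
    have h2 : dist (x + t • v) x = ‖t‖ * ‖v‖ := by
      rw [dist_eq_norm]
      have : x + t • v - x = t • v := by abel
      rw [this, norm_smul]
    rw [h2]
    calc ‖t‖ * ‖v‖ ≤ (s / ‖v‖) * ‖v‖ := by nlinarith [norm_nonneg t]
      _ = s := by field_simp
  have hlin : ∀ t : ℂ, HasDerivAt (fun t : ℂ => x + t • v) v t := by
    intro t
    simpa using ((hasDerivAt_id t).smul_const v).const_add x
  have hFdiff : DifferentiableOn ℂ (fun t : ℂ => f (x + t • v)) (ball 0 (s / ‖v‖)) := by
    intro t ht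
    exact (((hd _ (hmem t ht)).comp t (hlin t).differentiableAt)).differentiableWithinAt
  have hF0 : (fun t : ℂ => f (x + t • v)) 0 = f x := by simp
  have hFb : ∀ t ∈ ball (0:ℂ) (s / ‖v‖), ‖(fun t : ℂ => f (x + t • v)) t - (fun t : ℂ => f (x + t • v)) 0‖ ≤ r₂ := by
    intro t ht
    rw [hF0]
    exact hb _ (hmem t ht)
  have hkey := bochner_aux_core (fun t : ℂ => f (x + t • v)) (s / ‖v‖) r₂ (div_pos hs hvn)
    hFdiff hFb
  have hder : HasDerivAt (fun t : ℂ => f (x + t • v)) (fderiv ℂ f x v) 0 := by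
    have h1 : HasFDerivAt f (fderiv ℂ f x) ((fun t : ℂ => x + t • v) 0) := by
      simpa using (hd x (by simp [hs.le])).hasFDerivAt
    exact h1.comp_hasDerivAt 0 (hlin 0)
  rw [hder.deriv] at hkey
  calc ‖fderiv ℂ f x v‖ ≤ r₂ / (s / ‖v‖) := hkey
    _ = r₂ / s * ‖v‖ := by
        rw [div_div_eq_mul_div, div_mul_eq_mul_div, mul_comm]

/-- The derivative of a holomorphic function (in several variables) is continuous,
at any point of an open set on which the function is holomorphic. -/
lemma bochner_aux_fderiv_cont {n : ℕ} {D : Set (Fin n → ℂ)} (hD : IsOpen D)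
    {f : (Fin n → ℂ) → (Fin n → ℂ)} (hf : DifferentiableOn ℂ f D) {p : Fin n → ℂ}
    (hp : p ∈ D) : ContinuousAt (fderiv ℂ f) p := by
  rw [Metric.continuousAt_iff]
  intro ε hε
  obtain ⟨s0, hs0, hball⟩ := Metric.isOpen_iff.mp hD p hp
  set s := s0 / 4 with hs_def
  have hs : 0 < s := by positivity
  have hKD : closedBall p (3 * s) ⊆ D := fun y hy => by
    apply hball
    rw [Metric.mem_closedBall] at hy
    rw [Metric.mem_ball]
    have : (3:ℝ) * s < s0 := by rw [hs_def]; linarith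
    linarith
  have hKc : IsCompact (closedBall p (3 * s)) := isCompact_closedBall _ _
  have hUC := hKc.uniformContinuousOn_of_continuous ((hf.continuousOn).mono hKD)
  rw [Metric.uniformContinuousOn_iff] at hUC
  obtain ⟨δ, hδ, hδ'⟩ := hUC (ε * s / 4) (by positivity)
  refine ⟨min δ s, lt_min hδ hs, fun {x} hx => ?_⟩
  have hxp : dist x p < δ := lt_of_lt_of_le hx (min_le_left _ _)
  have hxs : dist x p < s := lt_of_lt_of_le hx (min_le_right _ _)
  have mem1 : ∀ y, dist y x ≤ s → y ∈ closedBall p (3 * s) := fun y hy => by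
    rw [Metric.mem_closedBall]
    calc dist y p ≤ dist y x + dist x p := dist_triangle _ _ _
      _ ≤ 3 * s := by linarith
  have mem2 : ∀ y, dist y x ≤ s → y + (p - x) ∈ closedBall p (3 * s) := fun y hy => by
    rw [Metric.mem_closedBall]
    have h1 : dist (y + (p - x)) p = dist y x := by
      rw [dist_eq_norm, dist_eq_norm]
      congr 1
      abel
    rw [h1]
    linarith
  have hpmem : p ∈ closedBall p (3 * s) := by
    rw [Metric.mem_closedBall]
    have := dist_self p
    linarith [dist_self p]
  set h : (Fin n → ℂ) → (Fin n → ℂ) := fun y => f y - f (y + (p - x)) with hh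
  have hdiff : ∀ y, dist y x ≤ s → DifferentiableAt ℂ h y := by
    intro y hy
    have h1 : DifferentiableAt ℂ f y := hf.differentiableAt (hD.mem_nhds (hKD (mem1 y hy)))
    have h2 : DifferentiableAt ℂ f (y + (p - x)) :=
      hf.differentiableAt (hD.mem_nhds (hKD (mem2 y hy)))
    exact h1.sub (h2.comp y (differentiableAt_id.add_const _))
  have hxx : x + (p - x) = p := by abel
  have hbnd : ∀ y, dist y x ≤ s → ‖h y - h x‖ ≤ ε * s / 4 + ε * s / 4 := by
    intro y hy
    have e1 : h x = f x - f p := by rw [hh]; simp [hxx]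
    have e2 : h y - h x = (f y - f (y + (p - x))) - (f x - f p) := by rw [e1]
    rw [e2]
    have d1 : dist y (y + (p - x)) = dist x p := by
      rw [dist_eq_norm, dist_eq_norm]
      have : y - (y + (p - x)) = x - p := by abel
      rw [this, norm_sub_rev]
    have t1 : dist (f y) (f (y + (p - x))) < ε * s / 4 :=
      hδ' y (mem1 y hy) _ (mem2 y hy) (by rw [d1]; exact hxp)
    have t2 : dist (f x) (f p) < ε * s / 4 :=
      hδ' x (mem1 x (by simp [hs.le])) p hpmem hxp
    rw [dist_eq_norm] at t1 t2
    calc ‖(f y - f (y + (p - x))) - (f x - f p)‖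
        ≤ ‖f y - f (y + (p - x))‖ + ‖f x - f p‖ := norm_sub_le _ _
      _ ≤ ε * s / 4 + ε * s / 4 := by linarith
  have hfd := bochner_aux_dir h x s (ε * s / 4 + ε * s / 4) hs hdiff hbnd
  have hder : HasFDerivAt h (fderiv ℂ f x - fderiv ℂ f p) x := by
    have h1 : HasFDerivAt f (fderiv ℂ f x) x :=
      (hf.differentiableAt (hD.mem_nhds (hKD (mem1 x (by simp [hs.le]))))).hasFDerivAt
    have h2 : HasFDerivAt f (fderiv ℂ f p) ((fun y => y + (p - x)) x) := by
      simpa [hxx] using (hf.differentiableAt (hD.mem_nhds hp)).hasFDerivAt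
    have h3 : HasFDerivAt (fun y : Fin n → ℂ => y + (p - x))
        (ContinuousLinearMap.id ℂ (Fin n → ℂ)) x := (hasFDerivAt_id x).add_const _
    have h4 := h1.sub (h2.comp x h3)
    rw [ContinuousLinearMap.comp_id] at h4
    exact h4
  have hopn : ‖fderiv ℂ f x - fderiv ℂ f p‖ ≤ ε / 2 := by
    apply ContinuousLinearMap.opNorm_le_bound _ (by positivity)
    intro v
    have h5 := hfd v
    rw [hder.fderiv] at h5
    calc ‖(fderiv ℂ f x - fderiv ℂ f p) v‖ ≤ (ε * s / 4 + ε * s / 4) / s * ‖v‖ := h5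
      _ = ε / 2 * ‖v‖ := by
          congr 1
          field_simp
          ring
  rw [dist_eq_norm]
  linarith

open Set Metric Filter MeasureTheory

/-- The derivative (at a fixed point) of a holomorphically-parametrized family is
measurable in the parameter, being a pointwise limit of difference quotients. -/
lemma bochner_aux_meas {n : ℕ} {D : Set (Fin n → ℂ)} (hD : IsOpen D) {G : Type*}
    [TopologicalSpace G] [MeasurableSpace G] [OpensMeasurableSpace G]
    {ρ : G → (Fin n → ℂ) → (Fin n → ℂ)}
    (hcont : ∀ z ∈ D, Continuous fun g => ρ g z)
    (hholo : ∀ g : G, DifferentiableOn ℂ (ρ g) D)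
    {q : Fin n → ℂ} (hq : q ∈ D) : Measurable fun g => fderiv ℂ (ρ g) q := by
  classical
  obtain ⟨ε, hε, hball⟩ := Metric.isOpen_iff.mp hD q hq
  set v : Fin n → (Fin n → ℂ) := fun j j' => if j' = j then 1 else 0 with hv
  have hvle : ∀ j, ‖v j‖ ≤ 1 := by
    intro j
    apply (pi_norm_le_iff_of_nonneg zero_le_one).mpr
    intro i
    rcases eq_or_ne i j with rfl | hij
    · simp [hv]
    · simp [hv, hij]
  set t : ℕ → ℂ := fun k => ((ε / (2 * (k + 1)) : ℝ) : ℂ) with ht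
  have htpos : ∀ k : ℕ, (0:ℝ) < ε / (2 * (k + 1)) := fun k => by positivity
  have htne : ∀ k : ℕ, t k ≠ 0 := fun k => by
    simp only [ht, ne_eq, Complex.ofReal_eq_zero]
    exact ne_of_gt (htpos k)
  have htnorm : ∀ k : ℕ, ‖t k‖ < ε := by
    intro k
    rw [ht]
    simp only [Complex.norm_real, Real.norm_eq_abs]
    rw [abs_of_pos (htpos k)]
    rw [div_lt_iff₀ (by positivity)]
    nlinarith [htpos k]
  have htlim : Tendsto t atTop (nhdsWithin 0 {(0:ℂ)}ᶜ) := by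
    apply tendsto_nhdsWithin_of_tendsto_nhds_of_eventually_within
    · have h0 : Tendsto (fun k : ℕ => ε / (2 * ((k:ℝ) + 1))) atTop (nhds 0) := by
        apply Tendsto.div_atTop (tendsto_const_nhds)
        apply Tendsto.const_mul_atTop two_pos
        exact tendsto_atTop_add_const_right _ 1 tendsto_natCast_atTop_atTop
      have := (Complex.continuous_ofReal.tendsto 0).comp h0
      simpa [ht, Function.comp_def] using this
    · exact Eventually.of_forall fun k => htne k
  have hzmem : ∀ k : ℕ, ∀ j, q + t k • v j ∈ D := by
    intro k j
    apply hball
    rw [Metric.mem_ball, dist_eq_norm]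
    have h1 : q + t k • v j - q = t k • v j := by abel
    rw [h1, norm_smul]
    calc ‖t k‖ * ‖v j‖ ≤ ‖t k‖ * 1 := by
          exact mul_le_mul_of_nonneg_left (hvle j) (norm_nonneg _)
      _ < ε := by rw [mul_one]; exact htnorm k
  have key : ∀ i j : Fin n, Measurable fun g => (fderiv ℂ (ρ g) q) (v j) i := by
    intro i j
    apply measurable_of_tendsto_metrizable' atTop
      (f := fun (k : ℕ) (g : G) => ((t k)⁻¹ • (ρ g (q + t k • v j) - ρ g q) : Fin n → ℂ) i)
    · intro k
      apply Continuous.measurable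
      exact (continuous_apply i).comp
        ((((hcont _ (hzmem k j)).sub (hcont q hq)).const_smul (t k)⁻¹))
    · rw [tendsto_pi_nhds]
      intro g
      have hdiff : DifferentiableAt ℂ (ρ g) q := (hholo g).differentiableAt (hD.mem_nhds hq)
      have hlin : HasDerivAt (fun s : ℂ => q + s • v j) (v j) 0 := by
        simpa using ((hasDerivAt_id (0:ℂ)).smul_const (v j)).const_add q
      have hF : HasDerivAt (fun s : ℂ => ρ g (q + s • v j)) (fderiv ℂ (ρ g) q (v j)) 0 := by
        have h1 : HasFDerivAt (ρ g) (fderiv ℂ (ρ g) q) ((fun s : ℂ => q + s • v j) 0) := by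
          simpa using hdiff.hasFDerivAt
        exact h1.comp_hasDerivAt 0 hlin
      have hslope := hasDerivAt_iff_tendsto_slope.mp hF
      have hcomp := hslope.comp htlim
      have heq : ∀ k : ℕ, (slope (fun s : ℂ => ρ g (q + s • v j)) 0 ∘ t) k
          = (t k)⁻¹ • (ρ g (q + t k • v j) - ρ g q) := by
        intro k
        simp [Function.comp, slope_def_module]
      rw [show (slope (fun s : ℂ => ρ g (q + s • v j)) 0 ∘ t)
          = fun k => (t k)⁻¹ • (ρ g (q + t k • v j) - ρ g q) from funext heq] at hcomp
      exact ((continuous_apply i).tendsto _).comp hcomp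
  have hmat : Measurable (fun g => (fun i j => (fderiv ℂ (ρ g) q) (v j) i :
      Fin n → Fin n → ℂ)) :=
    measurable_pi_lambda _ fun i => measurable_pi_lambda _ fun j => key i j
  let lin : (Fin n → Fin n → ℂ) →ₗ[ℂ] ((Fin n → ℂ) →L[ℂ] (Fin n → ℂ)) :=
    { toFun := fun M => LinearMap.toContinuousLinearMap (Matrix.toLin' (Matrix.of M))
      map_add' := by
        intro M N
        apply ContinuousLinearMap.ext
        intro w
        simp only [Matrix.toLin'_apply, LinearMap.coe_toContinuousLinearMap',
          ContinuousLinearMap.add_apply]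
        rw [show Matrix.of (M + N) = Matrix.of M + Matrix.of N from rfl, Matrix.add_mulVec]
      map_smul' := by
        intro c M
        apply ContinuousLinearMap.ext
        intro w
        simp only [Matrix.toLin'_apply, LinearMap.coe_toContinuousLinearMap',
          ContinuousLinearMap.coe_smul', Pi.smul_apply, RingHom.id_apply]
        rw [show Matrix.of (c • M) = c • Matrix.of M from rfl, Matrix.smul_mulVec] }
  have hfin : (fun g => fderiv ℂ (ρ g) q)
      = (fun M => lin M) ∘ (fun g => (fun i j => (fderiv ℂ (ρ g) q) (v j) i :
          Fin n → Fin n → ℂ)) := by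
    funext g
    simp only [Function.comp]
    have hof : Matrix.of (fun i j => (fderiv ℂ (ρ g) q) (v j) i)
        = LinearMap.toMatrix' ((fderiv ℂ (ρ g) q) : (Fin n → ℂ) →ₗ[ℂ] (Fin n → ℂ)) := by
      ext i j
      simp [LinearMap.toMatrix'_apply, hv]
      exact congrArg (fun w => fderiv ℂ (ρ g) q w i) (by ext j'; simp [Pi.single_apply])
    show _ = LinearMap.toContinuousLinearMap (Matrix.toLin' (Matrix.of (fun i j => (fderiv ℂ (ρ g) q) (v j) i) : Matrix (Fin n) (Fin n) ℂ))
    rw [hof, Matrix.toLin'_toMatrix']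
    apply ContinuousLinearMap.ext
    intro w
    simp
  rw [hfin]
  exact lin.continuous_of_finiteDimensional.measurable.comp hmat

open Set Metric Filter MeasureTheory

/-- **Bochner linearization (Lemma 2.1, non-foliated content).**
Let `D ⊆ ℂⁿ` be a bounded domain, `p ∈ D`, and `G` a compact topological group acting
continuously on `D` by biholomorphic automorphisms fixing `p`. Then there is a `G`-invariant
open neighbourhood `U ⊆ D` of `p` and a biholomorphism `ψ` from `U` onto an open subset of
`ℂⁿ` with `ψ p = 0` such that `ψ (g • q) = (dg_p) (ψ q)` for all `g ∈ G`, `q ∈ U`, where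
`dg_p = fderiv ℂ (ρ g) p` is the complex derivative of the action of `g` at `p`. -/
theorem bochner_linearization {n : ℕ} (D : Set (Fin n → ℂ))
    (hD_open : IsOpen D) (hD_conn : IsConnected D) (hD_bdd : Bornology.IsBounded D)
    (p : Fin n → ℂ) (hp : p ∈ D)
    (G : Type*) [Group G] [TopologicalSpace G] [IsTopologicalGroup G] [CompactSpace G]
    (ρ : G → (Fin n → ℂ) → (Fin n → ℂ))
    (hρ_cont : ContinuousOn (fun q : G × (Fin n → ℂ) => ρ q.1 q.2) (univ ×ˢ D))
    (hρ_one : ∀ z ∈ D, ρ 1 z = z)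
    (hρ_mul : ∀ g h : G, ∀ z ∈ D, ρ (g * h) z = ρ g (ρ h z))
    (hρ_holo : ∀ g : G, DifferentiableOn ℂ (ρ g) D)
    (hρ_maps : ∀ g : G, Set.MapsTo (ρ g) D D)
    (hρ_fix : ∀ g : G, ρ g p = p) :
    ∃ (U : Set (Fin n → ℂ)) (ψ : (Fin n → ℂ) → (Fin n → ℂ)),
      IsOpen U ∧ p ∈ U ∧ U ⊆ D ∧
      (∀ g : G, Set.MapsTo (ρ g) U U) ∧
      DifferentiableOn ℂ ψ U ∧ ψ p = 0 ∧ Set.InjOn ψ U ∧ IsOpen (ψ '' U) ∧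
      (∃ φ : (Fin n → ℂ) → (Fin n → ℂ),
        DifferentiableOn ℂ φ (ψ '' U) ∧ ∀ z ∈ U, φ (ψ z) = z) ∧
      ∀ g : G, ∀ q ∈ U, ψ (ρ g q) = fderiv ℂ (ρ g) p (ψ q) := by
  classical
  -- geometric setup
  obtain ⟨ε₀, hε₀, hball₀⟩ := Metric.isOpen_iff.mp hD_open p hp
  set r : ℝ := ε₀ / 4 with hr_def
  have hr : 0 < r := by positivity
  have hrD : ball p r ⊆ D := fun y hy => hball₀ (by
    rw [mem_ball] at hy ⊢; rw [hr_def] at hy; linarith)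
  set M : ℝ := Metric.diam D with hM_def
  have hM0 : 0 ≤ M := Metric.diam_nonneg
  have hMd : ∀ x ∈ D, ∀ y ∈ D, dist x y ≤ M := fun x hx y hy =>
    Metric.dist_le_diam_of_mem hD_bdd hx hy
  set C : ℝ := M / r with hC_def
  have hC0 : 0 ≤ C := by positivity
  have hmem2r : ∀ x ∈ ball p r, ∀ y : Fin n → ℂ, dist y x ≤ r → y ∈ D := by
    intro x hx y hy
    apply hball₀
    rw [mem_ball]
    have hx' : dist x p < r := mem_ball.mp hx
    have h2 : r + r ≤ ε₀ := by rw [hr_def]; linarith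
    calc dist y p ≤ dist y x + dist x p := dist_triangle _ _ _
      _ < ε₀ := by linarith
  -- uniform derivative bound
  have hC : ∀ g : G, ∀ x ∈ ball p r, ‖fderiv ℂ (ρ g) x‖ ≤ C := by
    intro g x hx
    apply ContinuousLinearMap.opNorm_le_bound _ hC0
    intro v
    apply bochner_aux_dir (ρ g) x r M hr
    · intro y hy
      exact (hρ_holo g).differentiableAt (hD_open.mem_nhds (hmem2r x hx y hy))
    · intro y hy
      rw [← dist_eq_norm]
      exact hMd _ (hρ_maps g (hmem2r x hx y hy)) _ (hρ_maps g (hrD hx))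
  set L : G → (Fin n → ℂ) →L[ℂ] (Fin n → ℂ) := fun g => fderiv ℂ (ρ g) p with hL_def
  have hLnorm : ∀ g : G, ‖L g‖ ≤ C := fun g => hC g p (mem_ball_self hr)
  have hDnhds : D ∈ nhds p := hD_open.mem_nhds hp
  -- group structure of the derivatives
  have hL_mul : ∀ g h : G, L (g * h) = (L g).comp (L h) := by
    intro g h
    have heq : (fun z => ρ (g * h) z) =ᶠ[nhds p] ((ρ g) ∘ (ρ h)) := by
      filter_upwards [hDnhds] with z hz using hρ_mul g h z hz
    have h1 : DifferentiableAt ℂ (ρ g) (ρ h p) := by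
      rw [hρ_fix h]; exact (hρ_holo g).differentiableAt hDnhds
    have h2 : DifferentiableAt ℂ (ρ h) p := (hρ_holo h).differentiableAt hDnhds
    calc L (g * h) = fderiv ℂ ((ρ g) ∘ (ρ h)) p := heq.fderiv_eq
      _ = (fderiv ℂ (ρ g) (ρ h p)).comp (fderiv ℂ (ρ h) p) := fderiv_comp p h1 h2
      _ = (L g).comp (L h) := by rw [hρ_fix h]
  have hL_one : L 1 = ContinuousLinearMap.id ℂ (Fin n → ℂ) := by
    have heq : (fun z => ρ 1 z) =ᶠ[nhds p] id := by
      filter_upwards [hDnhds] with z hz using hρ_one z hz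
    calc L 1 = fderiv ℂ id p := heq.fderiv_eq
      _ = ContinuousLinearMap.id ℂ (Fin n → ℂ) := fderiv_id
  have hL_inv : ∀ g : G, (L g⁻¹).comp (L g) = ContinuousLinearMap.id ℂ (Fin n → ℂ) := by
    intro g
    rw [← hL_mul, inv_mul_cancel, hL_one]
  have hL_inv' : ∀ g h : G, (L h).comp (L ((g * h)⁻¹)) = L g⁻¹ := by
    intro g h
    rw [← hL_mul]
    congr 1
    group
  -- Haar measure
  letI : MeasurableSpace G := borel G
  haveI : BorelSpace G := ⟨rfl⟩
  set K₀ : TopologicalSpace.PositiveCompacts G :=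
    ⟨⟨univ, isCompact_univ⟩, by rw [interior_univ]; exact ⟨1, trivial⟩⟩ with hK₀
  set ν : Measure G := (Measure.haarMeasure K₀).inv with hν
  haveI : IsProbabilityMeasure ν := by
    constructor
    rw [hν, Measure.inv_apply, Set.inv_univ]
    have := Measure.haarMeasure_self (K₀ := K₀)
    simpa [hK₀] using this
  -- continuity in the group variable
  have hcont_g : ∀ z ∈ D, Continuous fun g : G => ρ g z := by
    intro z hz
    exact hρ_cont.comp_continuous (continuous_id.prodMk continuous_const)
      (fun g => mk_mem_prod trivial hz)
  have hmeasL : ∀ q ∈ D, Measurable fun g : G => fderiv ℂ (ρ g) q := fun q hq =>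
    bochner_aux_meas hD_open hcont_g hρ_holo hq
  have hmeasLinv : Measurable fun g : G => L g⁻¹ :=
    (hmeasL p hp).comp continuous_inv.measurable
  -- the averaged map
  set Φ : G → (Fin n → ℂ) → (Fin n → ℂ) := fun g q => (L g⁻¹) (ρ g q - p) with hΦ
  have hΦmeas : ∀ q ∈ D, AEStronglyMeasurable (fun g => Φ g q) ν := by
    intro q hq
    apply Measurable.aestronglyMeasurable
    have h1 : Measurable fun g : G => (L g⁻¹, ρ g q - p) :=
      hmeasLinv.prodMk ((hcont_g q hq).sub continuous_const).measurable
    exact isBoundedBilinearMap_apply.continuous.measurable.comp h1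
  have hΦbound : ∀ q ∈ D, ∀ g : G, ‖Φ g q‖ ≤ C * M := by
    intro q hq g
    calc ‖(L g⁻¹) (ρ g q - p)‖ ≤ ‖L g⁻¹‖ * ‖ρ g q - p‖ := (L g⁻¹).le_opNorm _
      _ ≤ C * M := by
          apply mul_le_mul (hLnorm g⁻¹) _ (norm_nonneg _) hC0
          rw [← dist_eq_norm]
          exact hMd _ (hρ_maps g hq) _ hp
  have hΦint : ∀ q ∈ D, Integrable (fun g => Φ g q) ν := by
    intro q hq
    exact (integrable_const (C * M)).mono' (hΦmeas q hq)
      (Eventually.of_forall (hΦbound q hq))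
  set ψ : (Fin n → ℂ) → (Fin n → ℂ) := fun q => ∫ g, Φ g q ∂ν with hψdef
  have hψp : ψ p = 0 := by
    rw [hψdef]
    simp only [hΦ, hρ_fix, sub_self, map_zero]
    exact integral_zero _ _
  -- equivariance
  have hequiv : ∀ h : G, ∀ q ∈ D, ψ (ρ h q) = (L h) (ψ q) := by
    intro h q hq
    have e1 : ∀ g : G, Φ g (ρ h q) = (L h) (Φ (g * h) q) := by
      intro g
      have e2 : ρ g (ρ h q) = ρ (g * h) q := (hρ_mul g h q hq).symm
      calc Φ g (ρ h q) = (L g⁻¹) (ρ (g * h) q - p) := by rw [hΦ]; simp only [e2]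
        _ = ((L h).comp (L ((g * h)⁻¹))) (ρ (g * h) q - p) := by rw [hL_inv']
        _ = (L h) (Φ (g * h) q) := rfl
    have hint : Integrable (fun g => Φ (g * h) q) ν := (hΦint q hq).comp_mul_right h
    calc ψ (ρ h q) = ∫ g, (L h) (Φ (g * h) q) ∂ν := by
          rw [hψdef]; exact integral_congr_ae (Eventually.of_forall e1)
      _ = (L h) (∫ g, Φ (g * h) q ∂ν) := ContinuousLinearMap.integral_comp_comm _ hint
      _ = (L h) (ψ q) := by
          rw [hψdef, integral_mul_right_eq_self (fun g => Φ g q) h]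
  -- the derivative of the integrand
  set Φ' : G → (Fin n → ℂ) → ((Fin n → ℂ) →L[ℂ] (Fin n → ℂ)) :=
    fun g q => (L g⁻¹).comp (fderiv ℂ (ρ g) q) with hΦ'
  have hΦ'meas : ∀ q ∈ D, AEStronglyMeasurable (fun g => Φ' g q) ν := by
    intro q hq
    apply Measurable.aestronglyMeasurable
    have h1 : Measurable fun g : G => ((L g⁻¹ : (Fin n → ℂ) →L[ℂ] (Fin n → ℂ)),
        fderiv ℂ (ρ g) q) := hmeasLinv.prodMk (hmeasL q hq)
    have h2 : Continuous fun z : ((Fin n → ℂ) →L[ℂ] (Fin n → ℂ)) ×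
        ((Fin n → ℂ) →L[ℂ] (Fin n → ℂ)) => z.1.comp z.2 :=
      isBoundedBilinearMap_comp.continuous
    exact (h2.measurable).comp h1
  have hΦ'bound : ∀ g : G, ∀ q ∈ ball p r, ‖Φ' g q‖ ≤ C * C := by
    intro g q hq
    calc ‖(L g⁻¹).comp (fderiv ℂ (ρ g) q)‖ ≤ ‖L g⁻¹‖ * ‖fderiv ℂ (ρ g) q‖ :=
          ContinuousLinearMap.opNorm_comp_le _ _
      _ ≤ C * C := mul_le_mul (hLnorm _) (hC g q hq) (norm_nonneg _) hC0
  have hΦ'diff : ∀ g : G, ∀ q ∈ D, HasFDerivAt (fun x => Φ g x) (Φ' g q) q := by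
    intro g q hq
    have h1 : HasFDerivAt (ρ g) (fderiv ℂ (ρ g) q) q :=
      ((hρ_holo g).differentiableAt (hD_open.mem_nhds hq)).hasFDerivAt
    exact ((L g⁻¹).hasFDerivAt).comp q (h1.sub_const p)
  set A : (Fin n → ℂ) → ((Fin n → ℂ) →L[ℂ] (Fin n → ℂ)) := fun q => ∫ g, Φ' g q ∂ν with hA
  have hasF : ∀ q₀ ∈ ball p r, HasFDerivAt ψ (A q₀) q₀ := by
    intro q₀ hq₀
    have hq₀D : q₀ ∈ D := hrD hq₀
    have hε'pos : 0 < r - dist q₀ p := by rw [mem_ball] at hq₀; linarith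
    have hsub : ball q₀ (r - dist q₀ p) ⊆ ball p r := by
      intro x hx
      rw [mem_ball] at hx ⊢
      calc dist x p ≤ dist x q₀ + dist q₀ p := dist_triangle _ _ _
        _ < r := by linarith
    exact hasFDerivAt_integral_of_dominated_of_fderiv_le (ball_mem_nhds q₀ hε'pos)
      (by filter_upwards [hD_open.mem_nhds hq₀D] with x hx using hΦmeas x hx)
      (hΦint q₀ hq₀D)
      (hΦ'meas q₀ hq₀D)
      (Eventually.of_forall fun g x hx => hΦ'bound g x (hsub hx))
      (integrable_const _)
      (Eventually.of_forall fun g x hx => hΦ'diff g x (hrD (hsub hx)))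
  have hAp : A p = ContinuousLinearMap.id ℂ (Fin n → ℂ) := by
    have e1 : ∀ g : G, Φ' g p = ContinuousLinearMap.id ℂ (Fin n → ℂ) := fun g => hL_inv g
    have e2 : A p = ∫ _ : G, ContinuousLinearMap.id ℂ (Fin n → ℂ) ∂ν :=
      integral_congr_ae (Eventually.of_forall e1)
    rw [e2]
    simp
  have hAcont : ContinuousAt A p := by
    apply continuousAt_of_dominated (bound := fun _ => C * C)
    · filter_upwards [hDnhds] with x hx using hΦ'meas x hx
    · filter_upwards [ball_mem_nhds p hr] with x hx using
        Eventually.of_forall fun g => hΦ'bound g x hx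
    · exact integrable_const _
    · apply Eventually.of_forall
      intro g
      have h1 : ContinuousAt (fderiv ℂ (ρ g)) p :=
        bochner_aux_fderiv_cont hD_open (hρ_holo g) hp
      have h2 : Continuous fun B : (Fin n → ℂ) →L[ℂ] (Fin n → ℂ) => (L g⁻¹).comp B :=
        ((ContinuousLinearMap.compL ℂ (Fin n → ℂ) (Fin n → ℂ) (Fin n → ℂ)) (L g⁻¹)).continuous
      exact h2.continuousAt.comp h1
  -- strict differentiability of ψ at p with derivative the identity
  have hstrict : HasStrictFDerivAt ψ
      ((ContinuousLinearEquiv.refl ℂ (Fin n → ℂ) :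
        (Fin n → ℂ) ≃L[ℂ] (Fin n → ℂ)) : (Fin n → ℂ) →L[ℂ] (Fin n → ℂ)) p := by
    have h1 : HasStrictFDerivAt ψ (A p) p := by
      apply hasStrictFDerivAt_of_hasFDerivAt_of_continuousAt _ hAcont
      filter_upwards [ball_mem_nhds p hr] with x hx using hasF x hx
    rw [hAp] at h1
    simpa using h1
  set Ψ := hstrict.toOpenPartialHomeomorph ψ with hΨ
  have hΨcoe : (Ψ : (Fin n → ℂ) → (Fin n → ℂ)) = ψ := by
    rw [hΨ]; exact hstrict.toOpenPartialHomeomorph_coe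
  have hpsource : p ∈ Ψ.source := hstrict.mem_toOpenPartialHomeomorph_source
  -- the local inverse is differentiable near p
  have hφdiff : ∀ᶠ x in nhds p, DifferentiableAt ℂ Ψ.symm (ψ x) := by
    have hball1 : {B : (Fin n → ℂ) →L[ℂ] (Fin n → ℂ) |
        ‖B - ContinuousLinearMap.id ℂ (Fin n → ℂ)‖ < 1} ∈ nhds (A p) := by
      rw [hAp]
      refine mem_of_superset (ball_mem_nhds _ one_pos) ?_
      intro B hB
      rw [mem_ball, dist_eq_norm] at hB
      exact hB
    filter_upwards [Ψ.open_source.mem_nhds hpsource, ball_mem_nhds p hr,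
      hAcont.preimage_mem_nhds hball1] with x hx1 hx2 hx3
    have hx3' : ‖(1 : (Fin n → ℂ) →L[ℂ] (Fin n → ℂ)) - A x‖ < 1 := by
      rw [ContinuousLinearMap.one_def, norm_sub_rev]
      exact hx3
    set u : ((Fin n → ℂ) →L[ℂ] (Fin n → ℂ))ˣ := Units.oneSub _ hx3' with hu_def
    have hu : (u : (Fin n → ℂ) →L[ℂ] (Fin n → ℂ)) = A x := by
      rw [hu_def, Units.val_oneSub, sub_sub_cancel]
    set e := ContinuousLinearEquiv.unitsEquiv ℂ (Fin n → ℂ) u with he_def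
    have he : (e : (Fin n → ℂ) →L[ℂ] (Fin n → ℂ)) = A x := by
      rw [← hu]
      rfl
    have hψx : HasFDerivAt ψ (e : (Fin n → ℂ) →L[ℂ] (Fin n → ℂ)) x := by
      rw [he]
      exact hasF x hx2
    have hleft : Ψ.symm (ψ x) = x := by
      have := Ψ.left_inv hx1
      rwa [hΨcoe] at this
    have htarget : ψ x ∈ Ψ.target := by
      have := Ψ.map_source hx1
      rwa [hΨcoe] at this
    have hgcont : ContinuousAt Ψ.symm (ψ x) := Ψ.continuousAt_symm htarget
    have hfg : ∀ᶠ y in nhds (ψ x), ψ (Ψ.symm y) = y := by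
      filter_upwards [Ψ.open_target.mem_nhds htarget] with y hy
      have := Ψ.right_inv hy
      rwa [hΨcoe] at this
    have hf' : HasFDerivAt ψ (e : (Fin n → ℂ) →L[ℂ] (Fin n → ℂ)) (Ψ.symm (ψ x)) := by
      rw [hleft]; exact hψx
    exact (hf'.of_local_left_inverse hgcont hfg).differentiableAt
  -- choose a good open neighbourhood S of p
  have hgood : {x | x ∈ Ψ.source ∧ x ∈ ball p r ∧ DifferentiableAt ℂ Ψ.symm (ψ x)} ∈ nhds p := by
    filter_upwards [Ψ.open_source.mem_nhds hpsource, ball_mem_nhds p hr, hφdiff] with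
      x h1 h2 h3 using ⟨h1, h2, h3⟩
  obtain ⟨S, hS_sub, hS_open, hpS⟩ := _root_.mem_nhds_iff.mp hgood
  -- the invariant neighbourhood
  set U : Set (Fin n → ℂ) := {q ∈ D | ∀ g : G, ρ g q ∈ S} with hU
  have hUD : U ⊆ D := fun q hq => hq.1
  have hUsubS : U ⊆ S := by
    intro q hq
    have := hq.2 1
    rwa [hρ_one q hq.1] at this
  have hUsource : U ⊆ Ψ.source := fun q hq => (hS_sub (hUsubS hq)).1
  have hUball : U ⊆ ball p r := fun q hq => (hS_sub (hUsubS hq)).2.1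
  have hpU : p ∈ U := ⟨hp, fun g => by rw [hρ_fix g]; exact hpS⟩
  have hUopen : IsOpen U := by
    rw [isOpen_iff_forall_mem_open]
    intro q₀ hq₀
    have hW : IsOpen ((univ ×ˢ D) ∩ (fun z : G × (Fin n → ℂ) => ρ z.1 z.2) ⁻¹' S) :=
      hρ_cont.isOpen_inter_preimage (isOpen_univ.prod hD_open) hS_open
    have hsubW : (univ : Set G) ×ˢ ({q₀} : Set (Fin n → ℂ)) ⊆
        (univ ×ˢ D) ∩ (fun z : G × (Fin n → ℂ) => ρ z.1 z.2) ⁻¹' S := by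
      rintro ⟨g, q⟩ ⟨-, hq⟩
      rw [mem_singleton_iff] at hq
      subst hq
      exact ⟨⟨trivial, hq₀.1⟩, hq₀.2 g⟩
    obtain ⟨u', v', hu', hv', hsu, hsv, huv⟩ :=
      generalized_tube_lemma isCompact_univ isCompact_singleton hW hsubW
    refine ⟨v', ?_, hv', hsv rfl⟩
    intro q hq
    refine ⟨(huv (show ((1:G), q) ∈ u' ×ˢ v' from ⟨hsu trivial, hq⟩)).1.2, fun g => ?_⟩
    exact (huv (show (g, q) ∈ u' ×ˢ v' from ⟨hsu trivial, hq⟩)).2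
  have hUmaps : ∀ g : G, MapsTo (ρ g) U U := by
    intro g q hq
    refine ⟨hρ_maps g hq.1, fun h => ?_⟩
    rw [← hρ_mul h g q hq.1]
    exact hq.2 (h * g)
  -- conclusion
  refine ⟨U, ψ, hUopen, hpU, hUD, hUmaps, ?_, hψp, ?_, ?_, ⟨Ψ.symm, ?_, ?_⟩, ?_⟩
  · exact fun x hx => (hasF x (hUball hx)).differentiableAt.differentiableWithinAt
  · have := Ψ.injOn.mono hUsource
    rwa [hΨcoe] at this
  · have := Ψ.isOpen_image_of_subset_source hUopen hUsource
    rwa [hΨcoe] at this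
  · rintro y ⟨x, hx, rfl⟩
    exact ((hS_sub (hUsubS hx)).2.2).differentiableWithinAt
  · intro z hz
    have := Ψ.left_inv (hUsource hz)
    rwa [hΨcoe] at this
  · intro g q hq
    exact hequiv g q (hUD hq)
end

section
/- Let D ⊆ ℂⁿ be a bounded domain with 0 ∈ D, and let G be a compact topological group with Haar probability measure μ, acting continuously on D so that each g ∈ G acts as a biholomorphic automorphism of D fixing 0. For g ∈ G let L(g) ∈ GL(n,ℂ) be the complex derivative at 0 of the action of g, and define ψ : D → ℂⁿ by ψ(x) = ∫_G L(h)^{-1}(h·x) dμ(h) (a Bochner integral). Then: (i) g ↦ L(g) is a continuous group homomorphism from G to GL(n,ℂ); (ii) ψ is holomorphic on D, ψ(0) = 0, and the derivative of ψ at 0 is the identity; (iii) ψ(g·x) = L(g)(ψ(x)) for every g ∈ G and x ∈ D. -/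
open Set MeasureTheory Metric


lemma schwarz_pi {n : ℕ} {f : (Fin n → ℂ) → (Fin n → ℂ)} {c : Fin n → ℂ} {r R : ℝ}
    (hr : 0 < r) (hR : 0 ≤ R) (hd : DifferentiableOn ℂ f (ball c r))
    (hm : Set.MapsTo f (ball c r) (ball (f c) R)) :
    ‖fderiv ℂ f c‖ ≤ R / r := by
  have hfd : DifferentiableAt ℂ f c :=
    hd.differentiableAt (isOpen_ball.mem_nhds (mem_ball_self hr))
  apply ContinuousLinearMap.opNorm_le_bound _ (div_nonneg hR hr.le)
  intro v
  rcases eq_or_ne v 0 with rfl | hv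
  · simp [div_nonneg hR hr.le]
  set u : Fin n → ℂ := ‖v‖⁻¹ • v with hu
  have hu1 : ‖u‖ = 1 := norm_smul_inv_norm hv
  set φ : ℂ → (Fin n → ℂ) := fun t => f (c + t • u) with hφ
  have hline : ∀ t : ℂ, t ∈ ball (0 : ℂ) r → c + t • u ∈ ball c r := by
    intro t ht
    simp only [mem_ball, dist_eq_norm] at ht ⊢
    rw [add_sub_cancel_left, norm_smul, hu1, mul_one]
    simpa using ht
  have hinner : ∀ t : ℂ, HasDerivAt (fun s : ℂ => c + s • u) u t := by
    intro t
    simpa using ((hasDerivAt_id t).smul_const u).const_add c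
  have hφd : DifferentiableOn ℂ φ (ball (0 : ℂ) r) := fun t ht =>
    ((hd.differentiableAt (isOpen_ball.mem_nhds (hline t ht))).comp t
      (hinner t).differentiableAt).differentiableWithinAt
  have hφ0 : φ 0 = f c := by simp [hφ]
  have hmap : Set.MapsTo φ (ball (0 : ℂ) r) (ball (φ 0) R) := by
    intro t ht
    rw [hφ0]
    exact hm (hline t ht)
  have hb := Complex.norm_deriv_le_div_of_mapsTo_ball hφd (hmap.mono_right ball_subset_closedBall) hr
  have hder : HasDerivAt φ (fderiv ℂ f c u) 0 := by
    have h2 : HasFDerivAt f (fderiv ℂ f c) (c + (0:ℂ) • u) := by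
      simpa using hfd.hasFDerivAt
    exact h2.comp_hasDerivAt (0 : ℂ) (hinner 0)
  rw [hder.deriv] at hb
  have hvu : (‖v‖ : ℝ) • u = v := by
    rw [hu]
    exact smul_inv_smul₀ (norm_ne_zero_iff.mpr hv) v
  calc ‖fderiv ℂ f c v‖ = ‖fderiv ℂ f c ((‖v‖ : ℝ) • u)‖ := by rw [hvu]
    _ = ‖v‖ * ‖fderiv ℂ f c u‖ := by
        rw [(fderiv ℂ f c).map_smul_of_tower, norm_smul, Real.norm_eq_abs,
          abs_of_nonneg (norm_nonneg v)]
    _ ≤ ‖v‖ * (R / r) := mul_le_mul_of_nonneg_left hb (norm_nonneg v)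
    _ = R / r * ‖v‖ := mul_comm _ _

lemma fderiv_continuous_aux {n : ℕ} {D : Set (Fin n → ℂ)} (hD_open : IsOpen D)
    {G : Type*} [TopologicalSpace G]
    {ρ : G → (Fin n → ℂ) → (Fin n → ℂ)}
    (hρ_cont : ContinuousOn (fun q : G × (Fin n → ℂ) => ρ q.1 q.2) (univ ×ˢ D))
    (hρ_holo : ∀ g : G, DifferentiableOn ℂ (ρ g) D)
    {x₀ : Fin n → ℂ} (hx₀ : x₀ ∈ D) :
    Continuous fun g : G => fderiv ℂ (ρ g) x₀ := by
  have hopen : IsOpen ((univ : Set G) ×ˢ D) := isOpen_univ.prod hD_open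
  have hCA : ∀ (g : G) (z : Fin n → ℂ), z ∈ D →
      ContinuousAt (fun q : G × (Fin n → ℂ) => ρ q.1 q.2) (g, z) := fun g z hz =>
    hρ_cont.continuousAt (hopen.mem_nhds (by simp [hz]))
  have hdiffAt : ∀ (g : G) (x : Fin n → ℂ), x ∈ D → DifferentiableAt ℂ (ρ g) x :=
    fun g x hx => (hρ_holo g).differentiableAt (hD_open.mem_nhds hx)
  obtain ⟨ε, hε, hball⟩ := Metric.isOpen_iff.mp hD_open x₀ hx₀
  set r : ℝ := ε / 4 with hrdef
  have hr : 0 < r := by positivity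
  have hcb : closedBall x₀ (2 * r) ⊆ D := by
    refine subset_trans ?_ hball
    intro z hz
    have : dist z x₀ ≤ 2 * r := hz
    have : dist z x₀ < ε := by
      rw [hrdef] at this; linarith
    exact this
  rw [continuous_iff_continuousAt]
  intro g₀
  rw [Metric.continuousAt_iff']
  intro ε' hε'
  set δ : ℝ := r * ε' / 2 with hδdef
  have hδ : 0 < δ := by positivity
  have key : ∀ᶠ g in nhds g₀, ∀ z ∈ closedBall x₀ (2 * r), ‖ρ g z - ρ g₀ z‖ < δ := by
    apply (isCompact_closedBall x₀ (2 * r)).eventually_forall_of_forall_eventually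
    intro z hz
    have hzD : z ∈ D := hcb hz
    have hc1 : ContinuousAt (fun q : G × (Fin n → ℂ) => ρ q.1 q.2) (g₀, z) := hCA g₀ z hzD
    have hc2 : ContinuousAt (fun q : G × (Fin n → ℂ) => ρ g₀ q.2) (g₀, z) := by
      have h3 : ContinuousAt (fun w : Fin n → ℂ => ρ g₀ w) z :=
        (hCA g₀ z hzD).comp
          ((Continuous.prodMk_right g₀).continuousAt : ContinuousAt (fun w : Fin n → ℂ => (g₀, w)) z)
      exact h3.comp continuous_snd.continuousAt
    have hc : ContinuousAt (fun q : G × (Fin n → ℂ) => ‖ρ q.1 q.2 - ρ g₀ q.2‖) (g₀, z) :=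
      (hc1.sub hc2).norm
    have h0 : ‖ρ g₀ z - ρ g₀ z‖ < δ := by simpa using hδ
    exact hc.eventually_lt continuousAt_const h0
  filter_upwards [key] with g hg
  rw [dist_eq_norm]
  set f : (Fin n → ℂ) → (Fin n → ℂ) := fun z => ρ g z - ρ g₀ z with hf
  have hfd : DifferentiableOn ℂ f (ball x₀ (2 * r)) :=
    (((hρ_holo g).sub (hρ_holo g₀)).mono (subset_trans ball_subset_closedBall hcb))
  have hmaps : Set.MapsTo f (ball x₀ (2 * r)) (ball (f x₀) (2 * δ)) := by
    intro z hz
    have h1 : ‖f z‖ < δ := hg z (ball_subset_closedBall hz)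
    have h2 : ‖f x₀‖ < δ := hg x₀ (mem_closedBall_self (by positivity))
    rw [mem_ball, dist_eq_norm]
    calc ‖f z - f x₀‖ ≤ ‖f z‖ + ‖f x₀‖ := norm_sub_le _ _
      _ < 2 * δ := by linarith
  have hb := schwarz_pi (by positivity) (by positivity) hfd hmaps
  have heq : fderiv ℂ f x₀ = fderiv ℂ (ρ g) x₀ - fderiv ℂ (ρ g₀) x₀ :=
    fderiv_fun_sub (hdiffAt g x₀ hx₀) (hdiffAt g₀ x₀ hx₀)
  rw [heq] at hb
  calc ‖fderiv ℂ (ρ g) x₀ - fderiv ℂ (ρ g₀) x₀‖ ≤ 2 * δ / (2 * r) := hb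
    _ = ε' / 2 := by rw [hδdef]; field_simp
    _ < ε' := by linarith


/-- **Bochner averaging (proof of Lemma 2.1).**
Let `D ⊆ ℂⁿ` be a bounded domain with `0 ∈ D`, and `G` a compact topological group with Haar
probability measure `μ`, acting continuously on `D` by biholomorphic automorphisms fixing `0`.
For `g ∈ G` let `L g ∈ GL(n,ℂ)` be the complex derivative of the action of `g` at `0`, and set
`ψ x = ∫ h, (L h)⁻¹ (ρ h x) dμ(h)`. Then:
(i) `g ↦ L g` is a continuous group homomorphism into `GL(n,ℂ)`;
(ii) `ψ` is holomorphic on `D`, `ψ 0 = 0` and `dψ_0 = Id`;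
(iii) `ψ (g • x) = L g (ψ x)` for all `g ∈ G`, `x ∈ D`. -/
theorem bochner_averaging {n : ℕ} (D : Set (Fin n → ℂ))
    (hD_open : IsOpen D) (hD_conn : IsConnected D) (hD_bdd : Bornology.IsBounded D)
    (h0 : (0 : Fin n → ℂ) ∈ D)
    (G : Type*) [Group G] [TopologicalSpace G] [IsTopologicalGroup G] [CompactSpace G]
    [MeasurableSpace G] [BorelSpace G]
    (μ : Measure G) [μ.IsHaarMeasure] [IsProbabilityMeasure μ]
    (ρ : G → (Fin n → ℂ) → (Fin n → ℂ))
    (hρ_cont : ContinuousOn (fun q : G × (Fin n → ℂ) => ρ q.1 q.2) (univ ×ˢ D))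
    (hρ_one : ∀ z ∈ D, ρ 1 z = z)
    (hρ_mul : ∀ g h : G, ∀ z ∈ D, ρ (g * h) z = ρ g (ρ h z))
    (hρ_holo : ∀ g : G, DifferentiableOn ℂ (ρ g) D)
    (hρ_maps : ∀ g : G, Set.MapsTo (ρ g) D D)
    (hρ_fix : ∀ g : G, ρ g 0 = 0)
    (L : G → (Fin n → ℂ) ≃L[ℂ] (Fin n → ℂ))
    (hL : ∀ g : G, ((L g : (Fin n → ℂ) →L[ℂ] (Fin n → ℂ)) : (Fin n → ℂ) → (Fin n → ℂ))
      = fderiv ℂ (ρ g) 0)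
    (ψ : (Fin n → ℂ) → (Fin n → ℂ))
    (hψ : ∀ x : Fin n → ℂ, ψ x = ∫ h : G, (L h).symm (ρ h x) ∂μ) :
    -- (i) `L` is a continuous group homomorphism into `GL(n,ℂ)`
    ((∀ x : Fin n → ℂ, L 1 x = x) ∧
     (∀ g h : G, ∀ x : Fin n → ℂ, L (g * h) x = L g (L h x)) ∧
     Continuous fun g : G => (L g : (Fin n → ℂ) →L[ℂ] (Fin n → ℂ))) ∧
    -- (ii) `ψ` is holomorphic on `D`, `ψ 0 = 0` and its derivative at `0` is the identity
    (DifferentiableOn ℂ ψ D ∧ ψ 0 = 0 ∧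
      fderiv ℂ ψ 0 = ContinuousLinearMap.id ℂ (Fin n → ℂ)) ∧
    -- (iii) `ψ` intertwines the action `ρ` with the linear action `L`
    (∀ g : G, ∀ x ∈ D, ψ (ρ g x) = L g (ψ x)) := by
  have hLclm : ∀ g : G, (L g : (Fin n → ℂ) →L[ℂ] (Fin n → ℂ)) = fderiv ℂ (ρ g) 0 :=
    fun g => ContinuousLinearMap.ext fun x => congrFun (hL g) x
  have hdiffAt : ∀ (g : G) (x : Fin n → ℂ), x ∈ D → DifferentiableAt ℂ (ρ g) x :=
    fun g x hx => (hρ_holo g).differentiableAt (hD_open.mem_nhds hx)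
  -- (i) part 1 : L 1 = id
  have hL1 : ∀ x : Fin n → ℂ, L 1 x = x := by
    have he : ρ 1 =ᶠ[nhds (0 : Fin n → ℂ)] id := by
      filter_upwards [hD_open.mem_nhds h0] with z hz
      exact hρ_one z hz
    have hfd : fderiv ℂ (ρ 1) 0 = ContinuousLinearMap.id ℂ (Fin n → ℂ) := by
      rw [he.fderiv_eq, fderiv_id]
    intro x
    have := congrFun (hL 1) x
    simp only [hfd] at this
    simpa using this
  -- (i) part 2 : L (g * h) = L g ∘ L h
  have hLmul : ∀ g h : G, ∀ x : Fin n → ℂ, L (g * h) x = L g (L h x) := by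
    intro g h x
    have he : ρ (g * h) =ᶠ[nhds (0 : Fin n → ℂ)] (ρ g ∘ ρ h) := by
      filter_upwards [hD_open.mem_nhds h0] with z hz
      exact hρ_mul g h z hz
    have hcomp : fderiv ℂ (ρ g ∘ ρ h) 0
        = (fderiv ℂ (ρ g) 0).comp (fderiv ℂ (ρ h) 0) := by
      have := fderiv_comp (0 : Fin n → ℂ)
        (by rw [hρ_fix h]; exact hdiffAt g 0 h0) (hdiffAt h 0 h0)
      rwa [hρ_fix h] at this
    have hfd : fderiv ℂ (ρ (g * h)) 0 = (fderiv ℂ (ρ g) 0).comp (fderiv ℂ (ρ h) 0) := by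
      rw [he.fderiv_eq, hcomp]
    simp only [← ContinuousLinearEquiv.coe_coe, hL (g * h), hL g, hL h, hfd,
      ContinuousLinearMap.coe_comp', Function.comp_apply]
  -- (i) part 3 : continuity
  have hLcont : Continuous fun g : G => (L g : (Fin n → ℂ) →L[ℂ] (Fin n → ℂ)) := by
    have : (fun g : G => (L g : (Fin n → ℂ) →L[ℂ] (Fin n → ℂ)))
        = fun g : G => fderiv ℂ (ρ g) 0 := funext fun g => hLclm g
    rw [this]
    exact fderiv_continuous_aux hD_open hρ_cont hρ_holo h0
  have hLinvclmcont : Continuous fun g : G =>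
      ((L g⁻¹ : (Fin n → ℂ) ≃L[ℂ] (Fin n → ℂ)) : (Fin n → ℂ) →L[ℂ] (Fin n → ℂ)) :=
    hLcont.comp continuous_inv
  -- symm = L of inverse
  have hLsymm : ∀ (h : G) (y : Fin n → ℂ), (L h).symm y = L h⁻¹ y := by
    intro h y
    rw [ContinuousLinearEquiv.symm_apply_eq]
    rw [← hLmul h h⁻¹ y, mul_inv_cancel, hL1 y]
  have hψ' : ∀ x : Fin n → ℂ, ψ x = ∫ h : G, L h⁻¹ (ρ h x) ∂μ := by
    intro x
    rw [hψ x]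
    exact integral_congr_ae (Filter.Eventually.of_forall fun h => hLsymm h (ρ h x))
  -- continuity of h ↦ ρ h x for fixed x ∈ D
  have hρx : ∀ x ∈ D, Continuous fun h : G => ρ h x := by
    intro x hx
    have hopen : IsOpen ((univ : Set G) ×ˢ D) := isOpen_univ.prod hD_open
    rw [continuous_iff_continuousAt]
    intro g
    have hCA : ContinuousAt (fun q : G × (Fin n → ℂ) => ρ q.1 q.2) (g, x) :=
      hρ_cont.continuousAt (hopen.mem_nhds (by simp [hx]))
    have hpair : Continuous fun h : G => ((h, x) : G × (Fin n → ℂ)) := by fun_prop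
    exact ContinuousAt.comp (f := fun h : G => ((h, x) : G × (Fin n → ℂ))) (x := g)
      hCA hpair.continuousAt
  have hcontIntegrand : ∀ x ∈ D, Continuous fun h : G => L h⁻¹ (ρ h x) := by
    intro x hx
    exact hLinvclmcont.clm_apply (hρx x hx)
  -- integrability of continuous functions on G
  have hIntCont : ∀ f : G → (Fin n → ℂ), Continuous f → Integrable f μ := by
    intro f hf
    obtain ⟨g₁, -, hg₁⟩ := isCompact_univ.exists_isMaxOn univ_nonempty hf.norm.continuousOn
    exact (integrable_const ‖f g₁‖).mono' hf.aestronglyMeasurable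
      (Filter.Eventually.of_forall fun h => hg₁ (mem_univ h))
  have hInt : ∀ x ∈ D, Integrable (fun h : G => L h⁻¹ (ρ h x)) μ :=
    fun x hx => hIntCont _ (hcontIntegrand x hx)
  -- uniform bound on ‖(L g⁻¹ : CLM)‖
  obtain ⟨g₁, -, hC₁⟩ := isCompact_univ.exists_isMaxOn univ_nonempty
    (hLinvclmcont.norm.continuousOn)
  set C₁ : ℝ := ‖((L g₁⁻¹ : (Fin n → ℂ) ≃L[ℂ] (Fin n → ℂ)) :
    (Fin n → ℂ) →L[ℂ] (Fin n → ℂ))‖ with hC₁def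
  have hC₁0 : 0 ≤ C₁ := norm_nonneg _
  -- bound on D
  obtain ⟨M, hM⟩ := hD_bdd.subset_closedBall 0
  have hM0 : 0 ≤ M := by
    have := hM h0
    simpa using this
  have hnormD : ∀ z ∈ D, ‖z‖ ≤ M := by
    intro z hz
    have := hM hz
    rwa [mem_closedBall_zero_iff] at this
  -- the main derivative computation
  have hmain : ∀ x₀ ∈ D, HasFDerivAt ψ
      (∫ h : G, ((L h⁻¹ : (Fin n → ℂ) ≃L[ℂ] (Fin n → ℂ)) :
        (Fin n → ℂ) →L[ℂ] (Fin n → ℂ)).comp (fderiv ℂ (ρ h) x₀) ∂μ) x₀ := by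
    intro x₀ hx₀
    obtain ⟨ε, hε, hballD⟩ := Metric.isOpen_iff.mp hD_open x₀ hx₀
    set r : ℝ := ε / 4 with hrdef
    have hr : 0 < r := by positivity
    have hcb : closedBall x₀ (2 * r) ⊆ D := by
      refine subset_trans ?_ hballD
      intro z hz
      have h1 : dist z x₀ ≤ 2 * r := hz
      have : dist z x₀ < ε := by rw [hrdef] at h1; linarith
      exact this
    have hsub : ∀ x ∈ ball x₀ r, ball x r ⊆ D := by
      intro x hx z hz
      apply hcb
      have : dist z x₀ ≤ dist z x + dist x x₀ := dist_triangle z x x₀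
      have hz' : dist z x < r := hz
      have hx' : dist x x₀ < r := hx
      simp only [mem_closedBall]
      linarith
    have hmem : ∀ x ∈ ball x₀ r, x ∈ D := fun x hx => hsub x hx (mem_ball_self hr)
    -- derivative facts
    have hFd : ∀ (h : G), ∀ x ∈ ball x₀ r, HasFDerivAt (fun y => L h⁻¹ (ρ h y))
        (((L h⁻¹ : (Fin n → ℂ) ≃L[ℂ] (Fin n → ℂ)) :
          (Fin n → ℂ) →L[ℂ] (Fin n → ℂ)).comp (fderiv ℂ (ρ h) x)) x := by
      intro h x hx
      have h1 : HasFDerivAt (ρ h) (fderiv ℂ (ρ h) x) x := (hdiffAt h x (hmem x hx)).hasFDerivAt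
      exact (((L h⁻¹ : (Fin n → ℂ) ≃L[ℂ] (Fin n → ℂ)) :
        (Fin n → ℂ) →L[ℂ] (Fin n → ℂ)).hasFDerivAt.comp x h1 :)
    have hFb : ∀ (h : G), ∀ x ∈ ball x₀ r,
        ‖((L h⁻¹ : (Fin n → ℂ) ≃L[ℂ] (Fin n → ℂ)) :
          (Fin n → ℂ) →L[ℂ] (Fin n → ℂ)).comp (fderiv ℂ (ρ h) x)‖
          ≤ C₁ * ((2 * M + 1) / r) := by
      intro h x hx
      have hd2 : DifferentiableOn ℂ (ρ h) (ball x r) := (hρ_holo h).mono (hsub x hx)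
      have hmapsb : Set.MapsTo (ρ h) (ball x r) (ball (ρ h x) (2 * M + 1)) := by
        intro z hz
        have hzD : z ∈ D := hsub x hx hz
        have h1 : ‖ρ h z‖ ≤ M := hnormD _ (hρ_maps h hzD)
        have h2 : ‖ρ h x‖ ≤ M := hnormD _ (hρ_maps h (hmem x hx))
        rw [mem_ball, dist_eq_norm]
        calc ‖ρ h z - ρ h x‖ ≤ ‖ρ h z‖ + ‖ρ h x‖ := norm_sub_le _ _
          _ < 2 * M + 1 := by linarith
      have hb2 : ‖fderiv ℂ (ρ h) x‖ ≤ (2 * M + 1) / r :=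
        schwarz_pi hr (by linarith) hd2 hmapsb
      calc ‖((L h⁻¹ : (Fin n → ℂ) ≃L[ℂ] (Fin n → ℂ)) :
            (Fin n → ℂ) →L[ℂ] (Fin n → ℂ)).comp (fderiv ℂ (ρ h) x)‖
          ≤ ‖((L h⁻¹ : (Fin n → ℂ) ≃L[ℂ] (Fin n → ℂ)) :
            (Fin n → ℂ) →L[ℂ] (Fin n → ℂ))‖ * ‖fderiv ℂ (ρ h) x‖ :=
            ContinuousLinearMap.opNorm_comp_le _ _
        _ ≤ C₁ * ((2 * M + 1) / r) := by
            apply mul_le_mul (hC₁ (mem_univ h)) hb2 (norm_nonneg _) hC₁0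
    have key : HasFDerivAt (fun x => ∫ h : G, L h⁻¹ (ρ h x) ∂μ)
        (∫ h : G, ((L h⁻¹ : (Fin n → ℂ) ≃L[ℂ] (Fin n → ℂ)) :
          (Fin n → ℂ) →L[ℂ] (Fin n → ℂ)).comp (fderiv ℂ (ρ h) x₀) ∂μ) x₀ := by
      apply hasFDerivAt_integral_of_dominated_of_fderiv_le (ball_mem_nhds x₀ hr)
        (F := fun x h => L h⁻¹ (ρ h x))
        (F' := fun x h => ((L h⁻¹ : (Fin n → ℂ) ≃L[ℂ] (Fin n → ℂ)) :
          (Fin n → ℂ) →L[ℂ] (Fin n → ℂ)).comp (fderiv ℂ (ρ h) x))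
        (bound := fun _ => C₁ * ((2 * M + 1) / r))
      · filter_upwards [hD_open.mem_nhds hx₀] with x hx
        exact (hcontIntegrand x hx).aestronglyMeasurable
      · exact hInt x₀ hx₀
      · exact (hLinvclmcont.clm_comp
          (fderiv_continuous_aux hD_open hρ_cont hρ_holo hx₀)).aestronglyMeasurable
      · exact Filter.Eventually.of_forall fun h => fun x hx => hFb h x hx
      · exact integrable_const _
      · exact Filter.Eventually.of_forall fun h => fun x hx => hFd h x hx
    have hψfun : ψ = fun x => ∫ h : G, L h⁻¹ (ρ h x) ∂μ := funext hψ'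
    rw [hψfun]
    exact key
  -- right invariance of μ
  have hRight : μ.IsMulRightInvariant := by
    constructor
    intro g
    set ν := Measure.map (fun h => h * g) μ with hν
    haveI : IsProbabilityMeasure ν :=
      Measure.isProbabilityMeasure_map (measurable_mul_const g).aemeasurable
    haveI hνinv : ν.IsMulLeftInvariant := by
      constructor
      intro h
      rw [hν, Measure.map_map (measurable_const_mul h) (measurable_mul_const g)]
      have : ((fun x => h * x) ∘ fun x => x * g) = ((fun x => x * g) ∘ fun x => h * x) := by
        funext x; simp [mul_assoc]
      rw [this, ← Measure.map_map (measurable_mul_const g) (measurable_const_mul h),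
        Measure.IsMulLeftInvariant.map_mul_left_eq_self (μ := μ) h]
    have heq := Measure.isMulInvariant_eq_smul_of_compactSpace ν μ
    have hc : Measure.haarScalarFactor ν μ = 1 := by
      have huniv := congrArg (fun m : Measure G => m univ) heq
      simp only [Measure.smul_apply, measure_univ, ENNReal.smul_def, smul_eq_mul,
        mul_one] at huniv
      exact_mod_cast huniv.symm
    rw [hc, one_smul] at heq
    exact heq
  haveI := hRight
  refine ⟨⟨hL1, hLmul, hLcont⟩, ⟨?_, ?_, ?_⟩, ?_⟩
  · exact fun x hx => (hmain x hx).differentiableAt.differentiableWithinAt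
  · calc ψ 0 = ∫ h : G, L h⁻¹ (ρ h 0) ∂μ := hψ' 0
      _ = 0 := by simp [hρ_fix]
  · rw [(hmain 0 h0).fderiv]
    have h2 : ∀ h : G, ((L h⁻¹ : (Fin n → ℂ) ≃L[ℂ] (Fin n → ℂ)) :
        (Fin n → ℂ) →L[ℂ] (Fin n → ℂ)).comp (fderiv ℂ (ρ h) 0)
        = ContinuousLinearMap.id ℂ (Fin n → ℂ) := by
      intro h
      rw [← hLclm h]
      refine ContinuousLinearMap.ext fun y => ?_
      show L h⁻¹ (L h y) = y
      rw [← hLmul h⁻¹ h y, inv_mul_cancel, hL1 y]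
    simp only [h2, integral_const, measure_univ, ENNReal.toReal_one, probReal_univ, one_smul]
  · intro g x hx
    have hgx : ρ g x ∈ D := hρ_maps g hx
    have hint := hInt x hx
    rw [hψ' (ρ g x), hψ' x]
    calc ∫ h : G, L h⁻¹ (ρ h (ρ g x)) ∂μ
        = ∫ h : G, L h⁻¹ (ρ (h * g) x) ∂μ :=
          integral_congr_ae (Filter.Eventually.of_forall fun h => by simp only [hρ_mul h g x hx])
      _ = ∫ h : G, L (g * h⁻¹) (ρ h x) ∂μ := by
          have hrt := integral_mul_right_eq_self (μ := μ) (fun h : G => L (g * h⁻¹) (ρ h x)) g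
          rw [← hrt]
          refine integral_congr_ae (Filter.Eventually.of_forall fun h => ?_)
          have hgh : g * (h * g)⁻¹ = h⁻¹ := by group
          simp only [hgh]
      _ = ∫ h : G, L g (L h⁻¹ (ρ h x)) ∂μ :=
          integral_congr_ae (Filter.Eventually.of_forall fun h => hLmul g h⁻¹ (ρ h x))
      _ = L g (∫ h : G, L h⁻¹ (ρ h x) ∂μ) := by
          exact ContinuousLinearMap.integral_comp_comm
            ((L g : (Fin n → ℂ) ≃L[ℂ] (Fin n → ℂ)) :
              (Fin n → ℂ) →L[ℂ] (Fin n → ℂ)) hint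
end

section
/- There is no biholomorphism from ℂ × H onto ℍ², where H = {w ∈ ℂ : Im w > 0} is the upper half-plane and ℍ² = {(z,w) ∈ ℂ² : Im w > |z|²}. Consequently, the holomorphic submersion π : ℍ² → ℂ, (z,w) ↦ z, whose fibers are the half-planes {z₀} × {w : Im w > |z₀|²}, is not a holomorphically trivial fiber bundle over ℂ. -/
open Set

/-- The Siegel domain `ℍ² = {(z, w) ∈ ℂ² : Im w > |z|²}`. -/
def SiegelH2 : Set (ℂ × ℂ) := {p : ℂ × ℂ | ‖p.1‖ ^ 2 < p.2.im}

/-- The upper half-plane `H = {w ∈ ℂ : Im w > 0}`. -/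
def UpperHalf : Set ℂ := {w : ℂ | 0 < w.im}

/-- `f` is a biholomorphism from the domain `D` onto the domain `Ω`. -/
def IsBiholOnto {E F : Type*} [NormedAddCommGroup E] [NormedSpace ℂ E]
    [NormedAddCommGroup F] [NormedSpace ℂ F] (D : Set E) (Ω : Set F) (f : E → F) : Prop :=
  DifferentiableOn ℂ f D ∧ Set.MapsTo f D Ω ∧ Set.InjOn f D ∧ f '' D = Ω ∧
    ∃ finv : F → E, DifferentiableOn ℂ finv Ω ∧
      (∀ z ∈ D, finv (f z) = z) ∧ (∀ w ∈ Ω, f (finv w) = w)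

lemma cayley_ne {w : ℂ} (hw : 0 < w.im) : w + Complex.I ≠ 0 := by
  intro h
  have : (w + Complex.I).im = 0 := by rw [h]; simp
  simp [Complex.add_im] at this
  linarith

lemma cayley_norm_le {w : ℂ} (hw : 0 < w.im) :
    ‖(w - Complex.I) / (w + Complex.I)‖ ≤ 1 := by
  have hne := cayley_ne hw
  have hpos : (0:ℝ) < ‖w + Complex.I‖ := norm_pos_iff.mpr hne
  rw [norm_div, div_le_one hpos]
  have h1 : ‖(w - Complex.I)‖ ^ 2 ≤ ‖(w + Complex.I)‖ ^ 2 := by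
    rw [Complex.sq_norm, Complex.sq_norm, Complex.normSq_apply, Complex.normSq_apply]
    simp only [Complex.sub_im, Complex.add_im, Complex.sub_re, Complex.add_re,
      Complex.I_re, Complex.I_im]
    nlinarith
  have h2 := norm_nonneg (w + Complex.I)
  have h3 := norm_nonneg (w - Complex.I)
  calc ‖w - Complex.I‖ = ‖(w - Complex.I)‖ := rfl
    _ ≤ ‖(w + Complex.I)‖ := by nlinarith
    _ = ‖w + Complex.I‖ := rfl

lemma cayley_inj {w v : ℂ} (hw : 0 < w.im) (hv : 0 < v.im)
    (h : (w - Complex.I) / (w + Complex.I) = (v - Complex.I) / (v + Complex.I)) : w = v := by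
  have hw' := cayley_ne hw
  have hv' := cayley_ne hv
  field_simp at h
  have h2 : (2 : ℂ) * Complex.I * w = 2 * Complex.I * v := by linear_combination h
  have : (2 : ℂ) * Complex.I ≠ 0 := by simp [Complex.I_ne_zero]
  exact mul_left_cancel₀ this h2

/-- **Example 4.2.** There is no biholomorphism from `ℂ × H` onto `ℍ²`. Consequently the
holomorphic submersion `π : ℍ² → ℂ`, `(z, w) ↦ z`, whose fibers are the half-planes
`{z₀} × {Im w > |z₀|²}`, is not a holomorphically trivial fiber bundle over `ℂ`: there is
no biholomorphism `ℂ × H → ℍ²` commuting with the projections to `ℂ`. -/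
theorem no_biholomorphism_prod_halfplane_siegel :
    (¬ ∃ f : ℂ × ℂ → ℂ × ℂ, IsBiholOnto ((Set.univ : Set ℂ) ×ˢ UpperHalf) SiegelH2 f) ∧
    (¬ ∃ f : ℂ × ℂ → ℂ × ℂ, IsBiholOnto ((Set.univ : Set ℂ) ×ˢ UpperHalf) SiegelH2 f ∧
      ∀ p ∈ (Set.univ : Set ℂ) ×ˢ UpperHalf, (f p).1 = p.1) := by
  have key : ¬ ∃ f : ℂ × ℂ → ℂ × ℂ, IsBiholOnto ((Set.univ : Set ℂ) ×ˢ UpperHalf) SiegelH2 f := by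
    rintro ⟨f, hdiff, hmaps, hinj, -⟩
    have hDopen : IsOpen ((Set.univ : Set ℂ) ×ˢ UpperHalf) :=
      isOpen_univ.prod (isOpen_lt continuous_const Complex.continuous_im)
    have hmem : ∀ z : ℂ, (z, Complex.I) ∈ (Set.univ : Set ℂ) ×ˢ UpperHalf := by
      intro z
      exact ⟨mem_univ z, by simp [UpperHalf]⟩
    set φ : ℂ → ℂ × ℂ := fun z => f (z, Complex.I) with hφ
    have hφdiff : Differentiable ℂ φ := by
      intro z
      have h1 : DifferentiableAt ℂ f (z, Complex.I) :=
        (hdiff (z, Complex.I) (hmem z)).differentiableAt (hDopen.mem_nhds (hmem z))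
      exact h1.comp z ((differentiableAt_id.prodMk (differentiableAt_const _)))
    have hφmem : ∀ z : ℂ, 0 < (φ z).2.im := by
      intro z
      have h2 : ‖(φ z).1‖ ^ 2 < (φ z).2.im := hmaps (hmem z)
      have := sq_nonneg (‖(φ z).1‖)
      linarith
    -- Cayley transform of second coordinate
    set g : ℂ → ℂ := fun z => ((φ z).2 - Complex.I) / ((φ z).2 + Complex.I) with hg
    have hgdiff : Differentiable ℂ g := by
      intro z
      exact DifferentiableAt.div
        ((hφdiff z).snd.sub (differentiableAt_const _))
        ((hφdiff z).snd.add (differentiableAt_const _))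
        (cayley_ne (hφmem z))
    have hgbdd : Bornology.IsBounded (range g) := by
      apply (Metric.isBounded_closedBall (x := (0:ℂ)) (r := 1)).subset
      rintro - ⟨z, rfl⟩
      simp only [Metric.mem_closedBall, dist_zero_right]
      exact cayley_norm_le (hφmem z)
    have hgconst : ∀ z : ℂ, g z = g 0 := fun z =>
      hgdiff.apply_eq_apply_of_bounded hgbdd z 0
    have hsnd : ∀ z : ℂ, (φ z).2 = (φ 0).2 := fun z =>
      cayley_inj (hφmem z) (hφmem 0) (hgconst z)
    -- first coordinate is bounded
    set g1 : ℂ → ℂ := fun z => (φ z).1 with hg1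
    have hg1diff : Differentiable ℂ g1 := fun z => (hφdiff z).fst
    have hg1bdd : Bornology.IsBounded (range g1) := by
      apply (Metric.isBounded_closedBall (x := (0:ℂ)) (r := Real.sqrt ((φ 0).2.im))).subset
      rintro - ⟨z, rfl⟩
      have h2 : ‖(φ z).1‖ ^ 2 < (φ z).2.im := hmaps (hmem z)
      rw [hsnd z] at h2
      have hle : ‖(g1 z)‖ ≤ Real.sqrt ((φ 0).2.im) := by
        rw [show ‖(g1 z)‖ = Real.sqrt (‖(g1 z)‖ ^ 2) by
          rw [Real.sqrt_sq (norm_nonneg _)]]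
        exact Real.sqrt_le_sqrt h2.le
      simpa [Metric.mem_closedBall, dist_eq_norm] using hle
    have hg1const : g1 1 = g1 0 := hg1diff.apply_eq_apply_of_bounded hg1bdd 1 0
    have hφeq : φ 1 = φ 0 := Prod.ext hg1const (hsnd 1)
    have := hinj (hmem 1) (hmem 0) hφeq
    simpa using congrArg Prod.fst this
  exact ⟨key, fun ⟨f, hf, _⟩ => key ⟨f, hf⟩⟩
end
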